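/- Let K be a field, let q > 0 and k ≥ 1 be integers, and let M be a q×q matrix with entries in K⟦X⟧; write M = Σ_{j≥0} X^j M_j where each M_j is a q×q matrix over K (the j-th coefficient matrix of M). Let ψ_k : B_k^q → B_k^q be the B_k-linear map given by the reduction of M, where B_k := K⟦X⟧/(X^k). Then the dimension of the image of ψ_k as a K-vector space equals the rank of the (kq)×(kq) block matrix N_k over K whose block in block-row i and block-column j (for 0 ≤ i, j ≤ k−1) is M_{k−1−i−j} if k−1−i−j ≥ 0 and the zero matrix otherwise. -/

import Mathlib

open Matrix PowerSeries

section aux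
variable (K : Type*) [Field K] (k : ℕ)

private lemma mem_span_Xpow_iff (f : PowerSeries K) :
    f ∈ Ideal.span {(X : PowerSeries K) ^ k} ↔ ∀ i < k, coeff i f = 0 := by
  rw [Ideal.mem_span_singleton, X_pow_dvd_iff]

private lemma coeff_sum_smul (c : Fin k → K) (i : Fin k) :
    coeff (i : ℕ) (∑ j : Fin k, c j • (X : PowerSeries K) ^ (j : ℕ)) = c i := by
  rw [map_sum]
  rw [Finset.sum_eq_single i]
  · simp [coeff_X_pow]
  · intro j _ hj
    have : (i : ℕ) ≠ (j : ℕ) := fun h => hj (Fin.ext h).symm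
    simp [coeff_X_pow, this]
  · simp

private lemma mk_eq_sum (f : PowerSeries K) (hk : 1 ≤ k) :
    Ideal.Quotient.mk (Ideal.span {(X : PowerSeries K) ^ k}) f =
      ∑ i : Fin k, coeff (i : ℕ) f •
        Ideal.Quotient.mk (Ideal.span {(X : PowerSeries K) ^ k}) ((X : PowerSeries K) ^ (i : ℕ)) := by
  set I := Ideal.span {(X : PowerSeries K) ^ k}
  let L := (Ideal.Quotient.mkₐ K I).toLinearMap
  have hL : ∀ g, L g = Ideal.Quotient.mk I g := fun g => rfl
  have key : L (f - ∑ i : Fin k, coeff (i : ℕ) f • (X : PowerSeries K) ^ (i : ℕ)) = 0 := by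
    rw [hL, Ideal.Quotient.eq_zero_iff_mem, mem_span_Xpow_iff K]
    intro i hi
    rw [map_sub]
    have := coeff_sum_smul K k (fun j : Fin k => coeff (j : ℕ) f) ⟨i, hi⟩
    simp only [Fin.val_mk] at this ⊢
    rw [this, sub_self]
  rw [map_sub, map_sum, sub_eq_zero] at key
  simp only [_root_.map_smul] at key
  simpa only [hL] using key

noncomputable def basisB (hk : 1 ≤ k) :
    Module.Basis (Fin k) K (PowerSeries K ⧸ Ideal.span {(X : PowerSeries K) ^ k}) := by
  refine Module.Basis.mk (v := fun i : Fin k =>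
    Ideal.Quotient.mk (Ideal.span {(X : PowerSeries K) ^ k}) ((X : PowerSeries K) ^ (i : ℕ)))
    ?_ ?_
  · rw [Fintype.linearIndependent_iff]
    intro c hc i
    set I := Ideal.span {(X : PowerSeries K) ^ k}
    let L := (Ideal.Quotient.mkₐ K I).toLinearMap
    have : L (∑ j : Fin k, c j • (X : PowerSeries K) ^ (j : ℕ)) = 0 := by
      rw [map_sum]
      simp only [_root_.map_smul]
      exact hc
    rw [show ∀ g, L g = Ideal.Quotient.mk I g from fun g => rfl,
      Ideal.Quotient.eq_zero_iff_mem, mem_span_Xpow_iff K] at this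
    have h2 := this (i : ℕ) i.isLt
    rwa [coeff_sum_smul] at h2
  · rw [top_le_iff, eq_top_iff]
    rintro x -
    obtain ⟨f, rfl⟩ := Ideal.Quotient.mk_surjective x
    rw [mk_eq_sum K k f hk]
    exact Submodule.sum_mem _ fun i _ =>
      Submodule.smul_mem _ _ (Submodule.subset_span (Set.mem_range_self i))

lemma basisB_repr (hk : 1 ≤ k) (f : PowerSeries K) (i : Fin k) :
    (basisB K k hk).repr (Ideal.Quotient.mk (Ideal.span {(X : PowerSeries K) ^ k}) f) i =
      coeff (i : ℕ) f := by
  have : Ideal.Quotient.mk (Ideal.span {(X : PowerSeries K) ^ k}) f =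
      ∑ j : Fin k, coeff (j : ℕ) f • basisB K k hk j := by
    rw [mk_eq_sum K k f hk]
    simp [basisB, Module.Basis.mk_apply]
  rw [this]
  exact congrFun (Module.Basis.repr_sum_self _ _) i

lemma basisB_apply (hk : 1 ≤ k) (i : Fin k) :
    basisB K k hk i =
      Ideal.Quotient.mk (Ideal.span {(X : PowerSeries K) ^ k}) ((X : PowerSeries K) ^ (i : ℕ)) :=
  Module.Basis.mk_apply _ _ _

end aux

set_option maxHeartbeats 1600000 in
set_option synthInstance.maxHeartbeats 400000 in
/-- Let `K` be a field, `q > 0`, `k ≥ 1`, and `M` a `q × q` matrix over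
`K⟦X⟧`, with coefficient matrices `Mⱼ` over `K` (so `M = Σⱼ X^j Mⱼ`).  Let
`ψₖ : Bₖ^q → Bₖ^q` be the `Bₖ`-linear map induced by the reduction of `M` modulo `X^k`
(where `Bₖ := K⟦X⟧ ⧸ (X^k)`).  Then the `K`-dimension of the image of `ψₖ` equals the rank
of the `(kq) × (kq)` block matrix `Nₖ` over `K` whose block in block-row `i` and block-column
`j` (for `0 ≤ i, j ≤ k − 1`) is `M_{k−1−i−j}` if `k − 1 − i − j ≥ 0` and `0` otherwise. -/
theorem finrank_range_eq_rank_block_matrix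
    (K : Type*) [Field K]
    (q : ℕ) (hq : 0 < q) (k : ℕ) (hk : 1 ≤ k)
    (M : Matrix (Fin q) (Fin q) (PowerSeries K))
    (N : Matrix (Fin k × Fin q) (Fin k × Fin q) K)
    (hN : ∀ (i j : Fin k) (a b : Fin q),
      N (i, a) (j, b) =
        if (i : ℕ) + (j : ℕ) ≤ k - 1 then
          PowerSeries.coeff (k - 1 - (i : ℕ) - (j : ℕ)) (M a b)
        else 0) :
    Module.finrank K
      (Submodule.restrictScalars K
        (LinearMap.range (Matrix.toLin'
          (M.map (Ideal.Quotient.mk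
            (Ideal.span {(PowerSeries.X : PowerSeries K) ^ k})))))) = N.rank := by
  classical
  set I : Ideal (PowerSeries K) := Ideal.span {(PowerSeries.X : PowerSeries K) ^ k} with hI
  let β := basisB K k hk
  let e : (Σ _ : Fin q, Fin k) ≃ Fin k × Fin q :=
    (Equiv.sigmaEquivProd (Fin q) (Fin k)).trans (Equiv.prodComm (Fin q) (Fin k))
  let bb : Module.Basis (Fin k × Fin q) K (Fin q → PowerSeries K ⧸ I) :=
    (Pi.basis fun _ : Fin q => β).reindex e
  set Mbar := M.map (Ideal.Quotient.mk I) with hMbar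
  let g : (Fin q → PowerSeries K ⧸ I) →ₗ[K] (Fin q → PowerSeries K ⧸ I) :=
    (Matrix.toLin' Mbar).restrictScalars K
  have hrange : Submodule.restrictScalars K (LinearMap.range (Matrix.toLin' Mbar))
      = LinearMap.range g := rfl
  rw [hrange]
  set T := LinearMap.toMatrix bb bb g with hTdef
  have h1 : Module.finrank K (LinearMap.range g) = T.rank := by
    rw [hTdef, Matrix.rank_eq_finrank_range_toLin (LinearMap.toMatrix bb bb g) bb bb,
      Matrix.toLin_toMatrix]
  rw [h1]
  have hT : ∀ (i' i : Fin k) (b' a : Fin q),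
      T (i', b') (i, a) =
        if (i : ℕ) ≤ (i' : ℕ) then
          PowerSeries.coeff ((i' : ℕ) - (i : ℕ)) (M b' a) else 0 := by
    intro i' i b' a
    rw [hTdef, LinearMap.toMatrix_apply]
    have hbb : bb (i, a) = Pi.single a (β i) := by
      rw [Module.Basis.reindex_apply]
      have : e.symm (i, a) = ⟨a, i⟩ := rfl
      rw [this, Pi.basis_apply]
    rw [hbb]
    have hg : g (Pi.single a (β i)) = fun b'' => Mbar b'' a * β i := by
      show Matrix.toLin' Mbar (Pi.single a (β i)) = _
      rw [Matrix.toLin'_apply, Matrix.mulVec_single]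
      rfl
    rw [hg]
    have hrepr : bb.repr (fun b'' => Mbar b'' a * β i) (i', b') =
        β.repr (Mbar b' a * β i) i' := by
      rw [Module.Basis.repr_reindex_apply]
      exact Pi.basis_repr _ _ _
    rw [hrepr, hMbar]
    have : (M.map (Ideal.Quotient.mk I)) b' a * β i =
        Ideal.Quotient.mk I (M b' a * (PowerSeries.X : PowerSeries K) ^ (i : ℕ)) := by
      rw [Matrix.map_apply, basisB_apply]
      exact (_root_.map_mul _ _ _).symm
    rw [this, basisB_repr, PowerSeries.coeff_mul_X_pow']
  have hN' : N = T.submatrix (Equiv.prodCongr Fin.revPerm (Equiv.refl (Fin q)))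
      (Equiv.refl (Fin k × Fin q)) := by
    ext ⟨i, a⟩ ⟨j, b⟩
    rw [Matrix.submatrix_apply]
    have : (Equiv.prodCongr (Fin.revPerm) (Equiv.refl (Fin q))) (i, a) = (i.rev, a) := rfl
    rw [this, Equiv.refl_apply, hT, hN, Fin.val_rev]
    have hi : (i : ℕ) < k := i.isLt
    have h2 : k - ((i : ℕ) + 1) = k - 1 - (i : ℕ) := by omega
    rw [h2]
    exact if_congr (by omega) rfl rfl
  rw [hN']
  exact (Matrix.rank_submatrix T _ _).symm
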